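/- Let A ∈ ℝ and let y₁, y₂, x₁, x₂ : ℝ → ℝ be differentiable functions satisfying the Hénon-Heiles equations with ε = 16 and B = 16A: y₁' = x₁, y₂' = x₂, x₁' = −A y₁ − 2 y₁ y₂, x₂' = −16A y₂ − y₁² − 16 y₂². Then the function t ↦ H₂(y₁(t), y₂(t), x₁(t), x₂(t)), where H₂ = 3x₁⁴ + 6A x₁² y₁² + 12 x₁² y₁² y₂ − 4 x₁ x₂ y₁³ − 4A y₁⁴ y₂ − 4 y₁⁴ y₂² + 3A² y₁⁴ − (2/3) y₁⁶, is constant (its derivative vanishes identically). -/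

import Mathlib

/-- Along solutions of the Hénon–Heiles equations with ε = 16, B = 16A,
the quartic invariant H₂ is a constant of motion. -/
theorem henonHeiles_case_iii_H2_constant (A : ℝ) (y₁ y₂ x₁ x₂ : ℝ → ℝ)
    (hy₁ : Differentiable ℝ y₁) (hy₂ : Differentiable ℝ y₂)
    (hx₁ : Differentiable ℝ x₁) (hx₂ : Differentiable ℝ x₂)
    (h₁ : ∀ t, deriv y₁ t = x₁ t)
    (h₂ : ∀ t, deriv y₂ t = x₂ t)
    (h₃ : ∀ t, deriv x₁ t = -A * y₁ t - 2 * y₁ t * y₂ t)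
    (h₄ : ∀ t, deriv x₂ t = -(16 * A) * y₂ t - (y₁ t)^2 - 16 * (y₂ t)^2) :
    ∀ t, deriv (fun s =>
      3 * (x₁ s)^4 + 6 * A * (x₁ s)^2 * (y₁ s)^2 + 12 * (x₁ s)^2 * (y₁ s)^2 * (y₂ s)
        - 4 * (x₁ s) * (x₂ s) * (y₁ s)^3 - 4 * A * (y₁ s)^4 * (y₂ s)
        - 4 * (y₁ s)^4 * (y₂ s)^2 + 3 * A^2 * (y₁ s)^4 - (2/3) * (y₁ s)^6) t = 0 := by
  intro t
  have d1 : HasDerivAt y₁ (x₁ t) t := h₁ t ▸ (hy₁ t).hasDerivAt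
  have d2 : HasDerivAt y₂ (x₂ t) t := h₂ t ▸ (hy₂ t).hasDerivAt
  have d3 : HasDerivAt x₁ (-A * y₁ t - 2 * y₁ t * y₂ t) t := h₃ t ▸ (hx₁ t).hasDerivAt
  have d4 : HasDerivAt x₂ (-(16 * A) * y₂ t - (y₁ t)^2 - 16 * (y₂ t)^2) t :=
    h₄ t ▸ (hx₂ t).hasDerivAt
  have key := ((((((((d3.pow 4).const_mul 3).add
      (((d3.pow 2).const_mul (6 * A)).mul (d1.pow 2))).add
      ((((d3.pow 2).const_mul 12).mul (d1.pow 2)).mul d2)).sub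
      (((d3.const_mul 4).mul d4).mul (d1.pow 3))).sub
      (((d1.pow 4).const_mul (4 * A)).mul d2)).sub
      (((d1.pow 4).const_mul 4).mul (d2.pow 2))).add
      ((d1.pow 4).const_mul (3 * A^2))).sub
      ((d1.pow 6).const_mul (2/3))
  have h0 : HasDerivAt (fun s =>
      3 * (x₁ s)^4 + 6 * A * (x₁ s)^2 * (y₁ s)^2 + 12 * (x₁ s)^2 * (y₁ s)^2 * (y₂ s)
        - 4 * (x₁ s) * (x₂ s) * (y₁ s)^3 - 4 * A * (y₁ s)^4 * (y₂ s)
        - 4 * (y₁ s)^4 * (y₂ s)^2 + 3 * A^2 * (y₁ s)^4 - (2/3) * (y₁ s)^6) 0 t := by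
    convert key using 1
    · rfl
    · rfl
    · funext s
      simp only [Pi.add_apply, Pi.sub_apply, Pi.mul_apply, Pi.pow_apply]
    · simp only [Pi.mul_apply, Pi.pow_apply]
      push_cast
      ring
  exact h0.deriv
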